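/- There exists a separable, normal, nonmetrizable Moore space if and only if there exists an uncountable Q-set of reals. -/

import Mathlib

/-- A development for a topological space. -/
def IsDevelopment (X : Type) [TopologicalSpace X] (G : ℕ → Set (Set X)) : Prop :=
  (∀ n, ∀ U ∈ G n, IsOpen U) ∧
  (∀ n, ∀ x : X, ∃ U ∈ G n, x ∈ U) ∧
  ∀ (x : X) (U : Set X), IsOpen U → x ∈ U →
    ∃ n, ∀ V ∈ G n, x ∈ V → V ⊆ U

/-- A Moore space: a regular Hausdorff space admitting a development. -/
def MooreSpace (X : Type) [TopologicalSpace X] : Prop :=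
  T2Space X ∧ RegularSpace X ∧ ∃ G : ℕ → Set (Set X), IsDevelopment X G

/-- `A ⊆ ℝ` is a Q-set: every subset of `A` is a relative `Gδ` subset of `A`. -/
def IsQSet (A : Set ℝ) : Prop :=
  ∀ B ⊆ A, ∃ S : Set ℝ, IsGδ S ∧ B = S ∩ A

set_option linter.unusedSectionVars false
set_option linter.unusedVariables false

open TopologicalSpace Set

attribute [-instance] instTopologicalSpaceSum

namespace QMoore

variable (A : Set ℝ)

/-- cone neighborhood of the axis point `a`, level `n`. -/
def cone (a : ↥A) (n : ℕ) : Set (↥A ⊕ ℚ × ℚ) :=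
  {x | x = Sum.inl a ∨ ∃ q t : ℚ, x = Sum.inr (q, t) ∧ |(q : ℝ) - ↑a| < (t : ℝ) ∧
    (t : ℝ) < 1 / (n + 1)}

def qbasis : Set (Set (↥A ⊕ ℚ × ℚ)) :=
  {s | (∃ a n, s = cone A a n) ∨ ∃ p : ℚ × ℚ, s = {Sum.inr p}}

instance qtop : TopologicalSpace (↥A ⊕ ℚ × ℚ) := generateFrom (qbasis A)

variable {A}

lemma inl_mem_cone {a b : ↥A} {n : ℕ} : Sum.inl b ∈ cone A a n ↔ b = a := by
  constructor
  · rintro (h | ⟨q, t, h, -⟩)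
    · exact Sum.inl.inj h
    · exact absurd h (by simp)
  · rintro rfl; exact Or.inl rfl

lemma inr_mem_cone {a : ↥A} {n : ℕ} {q t : ℚ} :
    Sum.inr (q, t) ∈ cone A a n ↔ |(q : ℝ) - ↑a| < (t : ℝ) ∧ (t : ℝ) < 1 / (n + 1) := by
  constructor
  · rintro (h | ⟨q', t', h, h1, h2⟩)
    · exact absurd h (by simp)
    · obtain ⟨rfl, rfl⟩ : q = q' ∧ t = t' := by
        have := Sum.inr.inj h; exact ⟨congrArg Prod.fst this, congrArg Prod.snd this⟩
      exact ⟨h1, h2⟩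
  · rintro ⟨h1, h2⟩; exact Or.inr ⟨q, t, rfl, h1, h2⟩

lemma mem_cone_self (a : ↥A) (n : ℕ) : Sum.inl a ∈ cone A a n := Or.inl rfl

lemma cone_antitone {a : ↥A} {m n : ℕ} (h : m ≤ n) : cone A a n ⊆ cone A a m := by
  rintro x (hx | ⟨q, t, rfl, h1, h2⟩)
  · exact Or.inl hx
  · refine Or.inr ⟨q, t, rfl, h1, lt_of_lt_of_le h2 ?_⟩
    apply one_div_le_one_div_of_le (by positivity)
    exact_mod_cast by exact_mod_cast Nat.succ_le_succ h

lemma basic_of_inl_mem {s : Set (↥A ⊕ ℚ × ℚ)} (hs : s ∈ qbasis A) {a : ↥A}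
    (ha : Sum.inl a ∈ s) : ∃ n, s = cone A a n := by
  rcases hs with ⟨b, n, rfl⟩ | ⟨p, rfl⟩
  · exact ⟨n, by rw [(inl_mem_cone.1 ha)]⟩
  · exact absurd ha (by simp)

lemma isBasis : IsTopologicalBasis (qbasis A) := by
  refine ⟨?_, ?_, rfl⟩
  · rintro s1 hs1 s2 hs2 x ⟨hx1, hx2⟩
    rcases x with a | p
    · obtain ⟨n1, rfl⟩ := basic_of_inl_mem hs1 hx1
      obtain ⟨n2, rfl⟩ := basic_of_inl_mem hs2 hx2
      exact ⟨cone A a (max n1 n2), Or.inl ⟨a, _, rfl⟩, mem_cone_self a _,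
        subset_inter (cone_antitone (le_max_left _ _)) (cone_antitone (le_max_right _ _))⟩
    · exact ⟨{Sum.inr p}, Or.inr ⟨p, rfl⟩, rfl,
        by rintro x rfl; exact ⟨hx1, hx2⟩⟩
  · apply eq_univ_of_forall
    rintro (a | p)
    · exact ⟨cone A a 0, Or.inl ⟨a, 0, rfl⟩, mem_cone_self a 0⟩
    · exact ⟨{Sum.inr p}, Or.inr ⟨p, rfl⟩, rfl⟩

lemma isOpen_cone (a : ↥A) (n : ℕ) : IsOpen (cone A a n) :=
  isBasis.isOpen (Or.inl ⟨a, n, rfl⟩)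

lemma isOpen_singleton_inr (p : ℚ × ℚ) : IsOpen ({Sum.inr p} : Set (↥A ⊕ ℚ × ℚ)) :=
  isBasis.isOpen (Or.inr ⟨p, rfl⟩)

lemma mem_nhds_inl {s : Set (↥A ⊕ ℚ × ℚ)} {a : ↥A} :
    s ∈ nhds (Sum.inl a) ↔ ∃ n, cone A a n ⊆ s := by
  rw [isBasis.mem_nhds_iff]
  constructor
  · rintro ⟨t, ht, hat, hts⟩
    obtain ⟨n, rfl⟩ := basic_of_inl_mem ht hat
    exact ⟨n, hts⟩
  · rintro ⟨n, hn⟩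
    exact ⟨cone A a n, Or.inl ⟨a, n, rfl⟩, mem_cone_self a n, hn⟩

lemma singleton_mem_nhds_inr (p : ℚ × ℚ) :
    ({Sum.inr p} : Set (↥A ⊕ ℚ × ℚ)) ∈ nhds (Sum.inr p) :=
  (isOpen_singleton_inr p).mem_nhds rfl

lemma isOpen_inr_only {s : Set (↥A ⊕ ℚ × ℚ)} (h : ∀ x ∈ s, ∃ p, x = Sum.inr p) :
    IsOpen s := by
  rw [isOpen_iff_mem_nhds]
  intro x hx
  obtain ⟨p, rfl⟩ := h x hx
  exact Filter.mem_of_superset (singleton_mem_nhds_inr p) (by rintro y rfl; exact hx)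


-- helper: find level avoiding an isolated point
lemma exists_nat_one_div_lt' {ε : ℝ} (hε : 0 < ε) : ∃ m : ℕ, 1 / ((m : ℝ) + 1) < ε :=
  exists_nat_one_div_lt hε

lemma exists_level_notin (q t : ℚ) : ∃ m : ℕ, ∀ a : ↥A, Sum.inr (q, t) ∉ cone A a m := by
  rcases le_or_gt (t : ℝ) 0 with ht | ht
  · refine ⟨0, fun a h => ?_⟩
    have := (inr_mem_cone.1 h).1
    have : (0:ℝ) ≤ |(q:ℝ) - ↑a| := abs_nonneg _
    linarith [(inr_mem_cone.1 h).1]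
  · obtain ⟨m, hm⟩ := exists_nat_one_div_lt' ht
    refine ⟨m, fun a h => ?_⟩
    have := (inr_mem_cone.1 h).2
    linarith

-- cones over distinct axis points at deep enough levels are disjoint
lemma cone_inter_empty {a b : ↥A} (hab : a ≠ b) {n m : ℕ}
    (h : 2 / ((m : ℝ) + 1) ≤ |(↑a : ℝ) - ↑b|) : cone A a n ∩ cone A b m = ∅ := by
  ext x
  simp only [mem_inter_iff, mem_empty_iff_false, iff_false]
  rintro ⟨hxa, hxb⟩
  rcases x with c | ⟨q, t⟩
  · rw [inl_mem_cone] at hxa hxb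
    exact hab (hxa ▸ hxb ▸ rfl)
  · obtain ⟨h1, h2⟩ := inr_mem_cone.1 hxa
    obtain ⟨h3, h4⟩ := inr_mem_cone.1 hxb
    have : |(↑a : ℝ) - ↑b| ≤ |(q:ℝ) - ↑a| + |(q:ℝ) - ↑b| := by
      calc |(↑a : ℝ) - ↑b| ≤ |(↑a:ℝ) - q| + |(q:ℝ) - ↑b| := abs_sub_le _ _ _
      _ = |(q:ℝ) - ↑a| + |(q:ℝ) - ↑b| := by rw [abs_sub_comm (↑a:ℝ) q]
    have e : (2:ℝ) / ((m:ℝ)+1) = 2 * (1/((m:ℝ)+1)) := by ring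
    linarith

lemma exists_deep_level {a b : ↥A} (hab : a ≠ b) :
    ∃ m : ℕ, 2 / ((m : ℝ) + 1) ≤ |(↑a : ℝ) - ↑b| := by
  have hpos : 0 < |(↑a : ℝ) - ↑b| := by
    rw [abs_pos, sub_ne_zero]
    exact fun h => hab (Subtype.ext h)
  obtain ⟨m, hm⟩ := exists_nat_one_div_lt' (by linarith : 0 < |(↑a : ℝ) - ↑b| / 2)
  refine ⟨m, ?_⟩
  rw [div_le_iff₀ (by positivity)] at *
  rw [div_lt_iff₀ (by positivity)] at hm
  nlinarith [hm]

lemma t2 : T2Space (↥A ⊕ ℚ × ℚ) := by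
  constructor
  intro x y hxy
  rcases x with a | p <;> rcases y with b | p'
  · have hab : a ≠ b := fun h => hxy (by rw [h])
    obtain ⟨m, hm⟩ := exists_deep_level hab
    exact ⟨cone A a m, cone A b m, isOpen_cone a m, isOpen_cone b m, mem_cone_self a m,
      mem_cone_self b m, by rw [Set.disjoint_iff_inter_eq_empty]; exact cone_inter_empty hab hm⟩
  · obtain ⟨m, hm⟩ := exists_level_notin (A := A) p'.1 p'.2
    refine ⟨cone A a m, {Sum.inr p'}, isOpen_cone a m, isOpen_singleton_inr p',
      mem_cone_self a m, rfl, ?_⟩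
    rw [Set.disjoint_singleton_right]
    exact hm a
  · obtain ⟨m, hm⟩ := exists_level_notin (A := A) p.1 p.2
    refine ⟨{Sum.inr p}, cone A b m, isOpen_singleton_inr p, isOpen_cone b m, rfl,
      mem_cone_self b m, ?_⟩
    rw [Set.disjoint_singleton_left]
    exact hm b
  · refine ⟨{Sum.inr p}, {Sum.inr p'}, isOpen_singleton_inr p, isOpen_singleton_inr p', rfl, rfl, ?_⟩
    rw [Set.disjoint_singleton]
    exact fun h => hxy h

lemma isClosed_cone (a : ↥A) (n : ℕ) : IsClosed (cone A a n) := by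
  rw [← isOpen_compl_iff, isOpen_iff_mem_nhds]
  rintro (b | p) hx
  · have hb : b ≠ a := fun h => hx (h ▸ mem_cone_self a n)
    obtain ⟨m, hm⟩ := exists_deep_level (Ne.symm hb)
    rw [mem_nhds_inl]
    refine ⟨m, fun y hy hy' => ?_⟩
    have : y ∈ cone A a n ∩ cone A b m := ⟨hy', hy⟩
    rw [cone_inter_empty (Ne.symm hb) hm] at this
    exact this
  · exact Filter.mem_of_superset (singleton_mem_nhds_inr p) (by rintro y rfl; exact hx)

lemma regular : RegularSpace (↥A ⊕ ℚ × ℚ) := by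
  haveI : T2Space (↥A ⊕ ℚ × ℚ) := t2
  apply RegularSpace.of_exists_mem_nhds_isClosed_subset
  rintro (a | p) s hs
  · obtain ⟨n, hn⟩ := mem_nhds_inl.1 hs
    exact ⟨cone A a n, mem_nhds_inl.2 ⟨n, subset_rfl⟩, isClosed_cone a n, hn⟩
  · exact ⟨{Sum.inr p}, singleton_mem_nhds_inr p, isClosed_singleton,
      by rintro y rfl; exact mem_of_mem_nhds hs⟩


variable (A)

def dev (n : ℕ) : Set (Set (↥A ⊕ ℚ × ℚ)) :=
  {s | ∃ a, s = cone A a n} ∪ {s | ∃ p : ℚ × ℚ, s = {Sum.inr p}}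

variable {A}

lemma isDevelopment_dev :
    (∀ n, ∀ U ∈ dev A n, IsOpen U) ∧
    (∀ n, ∀ x : ↥A ⊕ ℚ × ℚ, ∃ U ∈ dev A n, x ∈ U) ∧
    ∀ (x : ↥A ⊕ ℚ × ℚ) (U : Set (↥A ⊕ ℚ × ℚ)), IsOpen U → x ∈ U →
      ∃ n, ∀ V ∈ dev A n, x ∈ V → V ⊆ U := by
  refine ⟨?_, ?_, ?_⟩
  · rintro n U (⟨a, rfl⟩ | ⟨p, rfl⟩)
    · exact isOpen_cone a n
    · exact isOpen_singleton_inr p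
  · rintro n (a | p)
    · exact ⟨cone A a n, Or.inl ⟨a, rfl⟩, mem_cone_self a n⟩
    · exact ⟨{Sum.inr p}, Or.inr ⟨p, rfl⟩, rfl⟩
  · rintro (a | p) U hU hxU
    · obtain ⟨n, hn⟩ := mem_nhds_inl.1 (hU.mem_nhds hxU)
      refine ⟨n, ?_⟩
      rintro V (⟨b, rfl⟩ | ⟨p, rfl⟩) hxV
      · rw [← inl_mem_cone.1 hxV]; exact hn
      · exact absurd hxV (by simp)
    · obtain ⟨m, hm⟩ := exists_level_notin (A := A) p.1 p.2
      refine ⟨m, ?_⟩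
      rintro V (⟨b, rfl⟩ | ⟨p', rfl⟩) hxV
      · exact absurd hxV (hm b)
      · rintro y rfl
        rw [← hxV]; exact hxU

lemma separable : SeparableSpace (↥A ⊕ ℚ × ℚ) := by
  refine ⟨⟨Set.range Sum.inr, countable_range _, ?_⟩⟩
  rw [dense_iff_inter_open]
  rintro U hU ⟨x, hx⟩
  rcases x with a | p
  · obtain ⟨n, hn⟩ := mem_nhds_inl.1 (hU.mem_nhds hx)
    have hpos : (0:ℝ) < 1 / ((n:ℝ)+1) := by positivity
    obtain ⟨t, ht0, htn⟩ := exists_rat_btwn hpos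
    obtain ⟨q, hq1, hq2⟩ := exists_rat_btwn (show (↑a - (t:ℝ)) < ↑a + (t:ℝ) by
      have : (0:ℝ) < t := by exact_mod_cast ht0
      linarith)
    refine ⟨Sum.inr (q, t), hn (inr_mem_cone.2 ⟨?_, htn⟩), ⟨(q, t), rfl⟩⟩
    rw [abs_sub_lt_iff]; constructor <;> linarith
  · exact ⟨Sum.inr p, hx, ⟨p, rfl⟩⟩

/-- The key separation lemma from the Q-set property. -/
lemma axis_sep (hQ : IsQSet A) (B C : Set ↥A) (hBC : Disjoint B C) :
    ∃ k : ↥A → ℕ, ∀ a ∈ B, ∀ b ∈ C, cone A a (k a) ∩ cone A b (k b) = ∅ := by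
  classical
  obtain ⟨S, hS, hSB⟩ := hQ (Subtype.val '' B) (by rintro x ⟨a, -, rfl⟩; exact a.2)
  obtain ⟨S', hS', hSB'⟩ := hQ (A \ Subtype.val '' B) diff_subset
  obtain ⟨W, hWo, rfl⟩ := hS.eq_iInter_nat
  obtain ⟨W', hWo', rfl⟩ := hS'.eq_iInter_nat
  -- membership facts
  have hBme : ∀ a : ↥A, a ∈ B → (∀ n, (a:ℝ) ∈ W n) ∧ ∃ m, (a:ℝ) ∉ W' m := by
    intro a ha
    have h1 : (a:ℝ) ∈ ⋂ n, W n := by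
      have : (a:ℝ) ∈ Subtype.val '' B := ⟨a, ha, rfl⟩
      rw [hSB] at this; exact this.1
    constructor
    · exact fun n => by exact mem_iInter.1 h1 n
    · by_contra h
      push_neg at h
      have : (a:ℝ) ∈ (⋂ n, W' n) ∩ A := ⟨mem_iInter.2 h, a.2⟩
      rw [← hSB'] at this
      exact this.2 ⟨a, ha, rfl⟩
  have hCme : ∀ b : ↥A, b ∈ C → (∀ n, (b:ℝ) ∈ W' n) ∧ ∃ m, (b:ℝ) ∉ W m := by
    intro b hb
    have hbB : b ∉ B := fun h => (hBC.ne_of_mem h hb) rfl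
    have hb1 : (b:ℝ) ∈ A \ Subtype.val '' B := by
      refine ⟨b.2, ?_⟩
      rintro ⟨a, ha, hab⟩
      exact hbB (by rwa [← Subtype.ext hab.symm] at ha)
    rw [hSB'] at hb1
    constructor
    · exact fun n => mem_iInter.1 hb1.1 n
    · by_contra h
      push_neg at h
      have : (b:ℝ) ∈ (⋂ n, W n) ∩ A := ⟨mem_iInter.2 h, b.2⟩
      rw [← hSB] at this
      obtain ⟨a, ha, hab⟩ := this
      exact hbB (by rwa [← Subtype.ext hab.symm] at ha)
  -- choose levels
  have key : ∀ x : ↥A, ∃ (k : ℕ) (m : ℕ),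
      (x ∈ B → ((x:ℝ) ∉ W' m) ∧ ∀ y : ℝ, |y - (x:ℝ)| < 2 / ((k:ℝ)+1) → ∀ i ≤ m, y ∈ W i) ∧
      (x ∈ C → ((x:ℝ) ∉ W m) ∧ ∀ y : ℝ, |y - (x:ℝ)| < 2 / ((k:ℝ)+1) → ∀ i ≤ m, y ∈ W' i) := by
    intro x
    by_cases hx : x ∈ B
    · obtain ⟨hall, m, hm⟩ := hBme x hx
      have hopen : IsOpen (⋂ i ∈ Finset.range (m+1), W i) :=
        isOpen_biInter_finset (fun i _ => hWo i)
      have hxmem : (x:ℝ) ∈ ⋂ i ∈ Finset.range (m+1), W i := by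
        simp only [mem_iInter]; exact fun i _ => hall i
      obtain ⟨ε, hε, hball⟩ := Metric.isOpen_iff.1 hopen _ hxmem
      obtain ⟨k, hk⟩ := exists_nat_one_div_lt' (by linarith : (0:ℝ) < ε / 2)
      refine ⟨k, m, fun _ => ⟨hm, fun y hy i hi => ?_⟩, fun hc => absurd hx (fun _ => (hBC.ne_of_mem hx hc) rfl)⟩
      have : y ∈ ⋂ i ∈ Finset.range (m+1), W i := by
        apply hball
        rw [Metric.mem_ball, Real.dist_eq]
        have : 2 / ((k:ℝ)+1) ≤ ε := by
          rw [div_lt_iff₀ (by positivity)] at hk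
          rw [div_le_iff₀ (by positivity)]
          nlinarith
        linarith
      simp only [mem_iInter] at this
      exact this i (Finset.mem_range.2 (Nat.lt_succ_of_le hi))
    · by_cases hxc : x ∈ C
      · obtain ⟨hall, m, hm⟩ := hCme x hxc
        have hopen : IsOpen (⋂ i ∈ Finset.range (m+1), W' i) :=
          isOpen_biInter_finset (fun i _ => hWo' i)
        have hxmem : (x:ℝ) ∈ ⋂ i ∈ Finset.range (m+1), W' i := by
          simp only [mem_iInter]; exact fun i _ => hall i
        obtain ⟨ε, hε, hball⟩ := Metric.isOpen_iff.1 hopen _ hxmem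
        obtain ⟨k, hk⟩ := exists_nat_one_div_lt' (by linarith : (0:ℝ) < ε / 2)
        refine ⟨k, m, fun hb => absurd hb hx, fun _ => ⟨hm, fun y hy i hi => ?_⟩⟩
        have : y ∈ ⋂ i ∈ Finset.range (m+1), W' i := by
          apply hball
          rw [Metric.mem_ball, Real.dist_eq]
          have : 2 / ((k:ℝ)+1) ≤ ε := by
            rw [div_lt_iff₀ (by positivity)] at hk
            rw [div_le_iff₀ (by positivity)]
            nlinarith
          linarith
        simp only [mem_iInter] at this
        exact this i (Finset.mem_range.2 (Nat.lt_succ_of_le hi))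
      · exact ⟨0, 0, fun hb => absurd hb hx, fun hc => absurd hc hxc⟩
  choose k m hk using key
  refine ⟨k, fun a ha b hb => ?_⟩
  obtain ⟨haW, haball⟩ := (hk a).1 ha
  obtain ⟨hbW, hbball⟩ := (hk b).2 hb
  ext x
  simp only [mem_inter_iff, mem_empty_iff_false, iff_false]
  rintro ⟨hxa, hxb⟩
  rcases x with c | ⟨q, t⟩
  · rw [inl_mem_cone] at hxa hxb
    exact (hBC.ne_of_mem ha hb) (hxa ▸ hxb ▸ rfl)
  · obtain ⟨h1, h2⟩ := inr_mem_cone.1 hxa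
    obtain ⟨h3, h4⟩ := inr_mem_cone.1 hxb
    -- |b - a| < 2t < 2/(k a + 1), and |a - b| < 2/(k b + 1)
    have hab1 : |(b:ℝ) - (a:ℝ)| < 2 / ((k a : ℝ)+1) := by
      have : |(b:ℝ) - (a:ℝ)| ≤ |(q:ℝ) - (a:ℝ)| + |(q:ℝ) - (b:ℝ)| := by
        calc |(b:ℝ) - (a:ℝ)| ≤ |(b:ℝ) - q| + |(q:ℝ) - (a:ℝ)| := abs_sub_le _ _ _
        _ = |(q:ℝ) - (a:ℝ)| + |(q:ℝ) - (b:ℝ)| := by rw [abs_sub_comm (b:ℝ) q]; ring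
      have e : (2:ℝ) / ((k a : ℝ)+1) = 2 * (1/((k a :ℝ)+1)) := by ring
      linarith
    have hab2 : |(a:ℝ) - (b:ℝ)| < 2 / ((k b : ℝ)+1) := by
      have : |(a:ℝ) - (b:ℝ)| ≤ |(q:ℝ) - (a:ℝ)| + |(q:ℝ) - (b:ℝ)| := by
        calc |(a:ℝ) - (b:ℝ)| ≤ |(a:ℝ) - q| + |(q:ℝ) - (b:ℝ)| := abs_sub_le _ _ _
        _ = |(q:ℝ) - (a:ℝ)| + |(q:ℝ) - (b:ℝ)| := by rw [abs_sub_comm (a:ℝ) q]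
      have e : (2:ℝ) / ((k b : ℝ)+1) = 2 * (1/((k b :ℝ)+1)) := by ring
      linarith
    have h5 : ∀ i ≤ m a, (b:ℝ) ∈ W i := haball (b:ℝ) hab1
    have h6 : ∀ i ≤ m b, (a:ℝ) ∈ W' i := hbball (a:ℝ) hab2
    rcases le_or_gt (m a) (m b) with h | h
    · exact haW (h6 (m a) h)
    · exact hbW (h5 (m b) h.le)

lemma normal (hQ : IsQSet A) : NormalSpace (↥A ⊕ ℚ × ℚ) := by
  classical
  constructor
  intro s t hs ht hst
  set B : Set ↥A := {a | Sum.inl a ∈ s} with hB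
  set C : Set ↥A := {a | Sum.inl a ∈ t} with hC
  have hBC : Disjoint B C := by
    rw [Set.disjoint_left]
    intro a ha hb
    exact (Set.disjoint_left.1 hst) ha hb
  obtain ⟨k, hk⟩ := axis_sep hQ B C hBC
  -- avoid the other closed set
  have havoid : ∀ a : ↥A, ∃ n : ℕ, (a ∈ B → cone A a n ⊆ tᶜ) ∧ (a ∈ C → cone A a n ⊆ sᶜ) := by
    intro a
    by_cases ha : a ∈ B
    · obtain ⟨n, hn⟩ := mem_nhds_inl.1 (ht.isOpen_compl.mem_nhds
        (fun h => Set.disjoint_left.1 hst ha h))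
      exact ⟨n, fun _ => hn, fun hc => absurd ((hBC.ne_of_mem ha hc) rfl) (fun h => h)⟩
    · by_cases hac : a ∈ C
      · obtain ⟨n, hn⟩ := mem_nhds_inl.1 (hs.isOpen_compl.mem_nhds
          (fun h => Set.disjoint_left.1 hst h hac))
        exact ⟨n, fun hb => absurd hb ha, fun _ => hn⟩
      · exact ⟨0, fun hb => absurd hb ha, fun hc => absurd hc hac⟩
  choose nn hnn using havoid
  set K : ↥A → ℕ := fun a => max (k a) (nn a) with hK
  set U : Set (↥A ⊕ ℚ × ℚ) :=
    {x ∈ s | ∃ p, x = Sum.inr p} ∪ ⋃ a ∈ B, cone A a (K a) with hUdef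
  set V : Set (↥A ⊕ ℚ × ℚ) :=
    {x ∈ t | ∃ p, x = Sum.inr p} ∪ ⋃ b ∈ C, cone A b (K b) with hVdef
  refine ⟨U, V, ?_, ?_, ?_, ?_, ?_⟩
  · exact (isOpen_inr_only (fun x hx => hx.2)).union
      (isOpen_biUnion (fun a _ => isOpen_cone a _))
  · exact (isOpen_inr_only (fun x hx => hx.2)).union
      (isOpen_biUnion (fun b _ => isOpen_cone b _))
  · rintro (a | p) hx
    · exact Or.inr (Set.mem_biUnion hx (mem_cone_self a _))
    · exact Or.inl ⟨hx, p, rfl⟩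
  · rintro (b | p) hx
    · exact Or.inr (Set.mem_biUnion hx (mem_cone_self b _))
    · exact Or.inl ⟨hx, p, rfl⟩
  · rw [Set.disjoint_left]
    rintro x (⟨hxs, -⟩ | hxB) hxV
    · rcases hxV with ⟨hxt, -⟩ | hxC
      · exact Set.disjoint_left.1 hst hxs hxt
      · obtain ⟨b, hb, hxb⟩ := Set.mem_iUnion₂.1 hxC
        have : cone A b (K b) ⊆ sᶜ :=
          (cone_antitone (le_max_right _ _)).trans ((hnn b).2 hb)
        exact this hxb hxs
    · obtain ⟨a, ha, hxa⟩ := Set.mem_iUnion₂.1 hxB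
      rcases hxV with ⟨hxt, -⟩ | hxC
      · have : cone A a (K a) ⊆ tᶜ :=
          (cone_antitone (le_max_right _ _)).trans ((hnn a).1 ha)
        exact this hxa hxt
      · obtain ⟨b, hb, hxb⟩ := Set.mem_iUnion₂.1 hxC
        have : x ∈ cone A a (k a) ∩ cone A b (k b) :=
          ⟨cone_antitone (le_max_left _ _) hxa, cone_antitone (le_max_left _ _) hxb⟩
        rw [hk a ha b hb] at this
        exact this

lemma not_metrizable (hA : ¬ A.Countable) : ¬ MetrizableSpace (↥A ⊕ ℚ × ℚ) := by
  intro h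
  obtain ⟨m, hm, hcg⟩ := h.exists_countably_generated
  haveI hsep : SeparableSpace (↥A ⊕ ℚ × ℚ) := separable
  haveI : SecondCountableTopology (↥A ⊕ ℚ × ℚ) := by
    rw [← hm] at hsep ⊢
    exact @UniformSpace.secondCountable_of_separable _ m hcg hsep
  have hbasis := isBasis_countableBasis (↥A ⊕ ℚ × ℚ)
  have hcnt := countable_countableBasis (↥A ⊕ ℚ × ℚ)
  have key : ∀ a : ↥A, ∃ u ∈ countableBasis (↥A ⊕ ℚ × ℚ),
      Sum.inl a ∈ u ∧ u ⊆ cone A a 0 := by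
    intro a
    obtain ⟨u, hu, hau, hsub⟩ := hbasis.mem_nhds_iff.1
      ((isOpen_cone a 0).mem_nhds (mem_cone_self a 0))
    exact ⟨u, hu, hau, hsub⟩
  choose u hu hau hsub using key
  have hinj : Function.Injective u := by
    intro a b hab
    have : Sum.inl b ∈ cone A a 0 := hsub a (hab ▸ hau b)
    exact (inl_mem_cone.1 this).symm
  have : Countable ↥A := by
    haveI := hcnt.to_subtype
    exact Function.Injective.countable (f := fun a => (⟨u a, hu a⟩ : ↥(countableBasis (↥A ⊕ ℚ × ℚ))))
      (fun a b h => hinj (congrArg Subtype.val h))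
  exact hA (Set.countable_coe_iff.1 this)

theorem backward (A : Set ℝ) (hQ : IsQSet A) (hA : ¬ A.Countable) :
    ∃ (X : Type) (t : TopologicalSpace X),
      @MooreSpace X t ∧ @TopologicalSpace.SeparableSpace X t ∧ @NormalSpace X t ∧
        ¬ @TopologicalSpace.MetrizableSpace X t :=
  ⟨↥A ⊕ ℚ × ℚ, qtop A, ⟨t2, regular, dev A, isDevelopment_dev⟩, separable, normal hQ,
    not_metrizable hA⟩


section Forward

variable {X : Type} [TopologicalSpace X]

/-- level-n refined development pieces -/
def lev (G : ℕ → Set (Set X)) (n : ℕ) : Set (Set X) :=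
  {V | ∃ W : ℕ → Set X, (∀ k ≤ n, W k ∈ G k) ∧ V = ⋂ k ∈ Finset.range (n + 1), W k}

def star (G : ℕ → Set (Set X)) (x : X) (n : ℕ) : Set X :=
  ⋃₀ {V | V ∈ lev G n ∧ x ∈ V}

lemma subset_star {G : ℕ → Set (Set X)} {V : Set X} {x : X} {n : ℕ}
    (hV : V ∈ lev G n) (hx : x ∈ V) : V ⊆ star G x n :=
  fun y hy => ⟨V, ⟨hV, hx⟩, hy⟩

lemma mem_star_iff {G : ℕ → Set (Set X)} {x y : X} {n : ℕ} :
    y ∈ star G x n ↔ ∃ V, V ∈ lev G n ∧ x ∈ V ∧ y ∈ V := by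
  constructor
  · rintro ⟨V, ⟨hV, hx⟩, hy⟩; exact ⟨V, hV, hx, hy⟩
  · rintro ⟨V, hV, hx, hy⟩; exact ⟨V, ⟨hV, hx⟩, hy⟩

lemma isOpen_of_lev {G : ℕ → Set (Set X)} (hG : IsDevelopment X G) {V : Set X} {n : ℕ}
    (hV : V ∈ lev G n) : IsOpen V := by
  obtain ⟨W, hW, rfl⟩ := hV
  exact isOpen_biInter_finset fun k hk =>
    hG.1 k (W k) (hW k (Nat.lt_succ_iff.1 (Finset.mem_range.1 hk)))

lemma isOpen_star {G : ℕ → Set (Set X)} (hG : IsDevelopment X G) (x : X) (n : ℕ) :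
    IsOpen (star G x n) :=
  isOpen_sUnion fun _ hV => isOpen_of_lev hG hV.1

lemma exists_lev_mem {G : ℕ → Set (Set X)} (hG : IsDevelopment X G) (x : X) (n : ℕ) :
    ∃ V, V ∈ lev G n ∧ x ∈ V := by
  choose W hWG hWx using fun k => hG.2.1 k x
  exact ⟨⋂ k ∈ Finset.range (n + 1), W k, ⟨W, fun k _ => hWG k, rfl⟩,
    mem_biInter fun k _ => hWx k⟩

lemma mem_star_self {G : ℕ → Set (Set X)} (hG : IsDevelopment X G) (x : X) (n : ℕ) :
    x ∈ star G x n := by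
  obtain ⟨V, hV, hx⟩ := exists_lev_mem hG x n
  exact subset_star hV hx hx

lemma star_anti {G : ℕ → Set (Set X)} {x : X} {m n : ℕ} (h : m ≤ n) :
    star G x n ⊆ star G x m := by
  rintro y ⟨V, ⟨⟨W, hW, rfl⟩, hx⟩, hy⟩
  refine ⟨⋂ k ∈ Finset.range (m + 1), W k,
    ⟨⟨W, fun k hk => hW k (hk.trans h), rfl⟩, ?_⟩, ?_⟩
  · exact mem_biInter fun k hk => (mem_iInter₂.1 hx) k
      (Finset.mem_range.2 ((Finset.mem_range.1 hk).trans_le (Nat.succ_le_succ h)))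
  · exact mem_biInter fun k hk => (mem_iInter₂.1 hy) k
      (Finset.mem_range.2 ((Finset.mem_range.1 hk).trans_le (Nat.succ_le_succ h)))

lemma star_subset_of_open {G : ℕ → Set (Set X)} (hG : IsDevelopment X G) {x : X} {U : Set X}
    (hU : IsOpen U) (hx : x ∈ U) : ∃ n, star G x n ⊆ U := by
  obtain ⟨n, hn⟩ := hG.2.2 x U hU hx
  refine ⟨n, ?_⟩
  rintro y ⟨V, ⟨⟨W, hW, rfl⟩, hxV⟩, hyV⟩
  have hmem : n ∈ Finset.range (n + 1) := Finset.mem_range.2 (Nat.lt_succ_self n)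
  have hWn : W n ∈ G n := hW n le_rfl
  have hxW : x ∈ W n := (mem_iInter₂.1 hxV) n hmem
  exact hn (W n) hWn hxW ((mem_iInter₂.1 hyV) n hmem)

lemma subsets_of_discrete_closed {S B : Set X} (hS : IsClosed S)
    (hd : ∀ x ∈ S, ∃ U, IsOpen U ∧ U ∩ S = {x}) (hB : B ⊆ S) : IsClosed B := by
  rw [← isOpen_compl_iff, isOpen_iff_mem_nhds]
  intro z hz
  by_cases hzS : z ∈ S
  · obtain ⟨U, hU, hUS⟩ := hd z hzS
    have hzU : z ∈ U := by
      have : z ∈ U ∩ S := hUS ▸ rfl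
      exact this.1
    refine Filter.mem_of_superset (hU.mem_nhds hzU) ?_
    intro y hyU hyB
    have : y ∈ U ∩ S := ⟨hyU, hB hyB⟩
    rw [hUS] at this
    exact hz (this ▸ hyB)
  · exact Filter.mem_of_superset (hS.isOpen_compl.mem_nhds hzS)
      (fun y hy hyB => hy (hB hyB))

lemma exists_countable_subcover {G : ℕ → Set (Set X)} [T2Space X]
    (hG : IsDevelopment X G)
    (hext : ∀ S : Set X, IsClosed S → (∀ x ∈ S, ∃ U, IsOpen U ∧ U ∩ S = {x}) → S.Countable)
    (𝒰 : Set (Set X)) (hop : ∀ U ∈ 𝒰, IsOpen U) (hcov : ∀ x : X, ∃ U ∈ 𝒰, x ∈ U) :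
    ∃ 𝒞 ⊆ 𝒰, 𝒞.Countable ∧ ∀ x : X, ∃ U ∈ 𝒞, x ∈ U := by
  classical
  haveI : IsWellOrder ↥𝒰 WellOrderingRel := WellOrderingRel.isWellOrder
  have hwf : WellFounded (WellOrderingRel (α := ↥𝒰)) := IsWellFounded.wf
  set H : ℕ → ↥𝒰 → Set X := fun n U =>
    {x | star G x n ⊆ ↑U ∧ ∀ U' : ↥𝒰, WellOrderingRel U' U → x ∉ (U' : Set X)} with hH
  have hHcov : ∀ x : X, ∃ n U, x ∈ H n U := by
    intro x
    have hne : {U : ↥𝒰 | x ∈ (U : Set X)}.Nonempty := by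
      obtain ⟨U, hU, hx⟩ := hcov x
      exact ⟨⟨U, hU⟩, hx⟩
    set U₀ := hwf.min _ hne with hU₀def
    have hxU₀ : x ∈ (U₀ : Set X) := hwf.min_mem _ hne
    obtain ⟨n, hn⟩ := star_subset_of_open hG (hop _ U₀.2) hxU₀
    exact ⟨n, U₀, hn, fun U' hU' hx' => hwf.not_lt_min _ hx' hU'⟩
  have hkey : ∀ n V, V ∈ lev G n → ∀ x y : X, x ∈ V → y ∈ V →
      ∀ U U' : ↥𝒰, x ∈ H n U → y ∈ H n U' → U = U' := by
    intro n V hV x y hx hy U U' hxH hyH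
    rcases trichotomous_of WellOrderingRel U U' with h | h | h
    · exact absurd (hxH.1 (subset_star hV hx hy)) (hyH.2 U h)
    · exact h
    · exact absurd (hyH.1 (subset_star hV hy hx)) (hxH.2 U' h)
  have hcnt : ∀ n, {U : ↥𝒰 | (H n U).Nonempty}.Countable := by
    intro n
    set T := {U : ↥𝒰 | (H n U).Nonempty} with hT
    choose pt hpt using fun U : ↥T => U.2
    set S : Set X := Set.range pt with hSdef
    have hS1 : ∀ z : X, ∃ V, IsOpen V ∧ z ∈ V ∧ ∀ w₁ ∈ V ∩ S, ∀ w₂ ∈ V ∩ S, w₁ = w₂ := by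
      intro z
      obtain ⟨V, hV, hzV⟩ := exists_lev_mem hG z n
      refine ⟨V, isOpen_of_lev hG hV, hzV, ?_⟩
      rintro w₁ ⟨hw₁V, U₁, rfl⟩ w₂ ⟨hw₂V, U₂, rfl⟩
      have := hkey n V hV _ _ hw₁V hw₂V _ _ (hpt U₁) (hpt U₂)
      rw [Subtype.ext this]
    have hSclosed : IsClosed S := by
      rw [← isOpen_compl_iff, isOpen_iff_mem_nhds]
      intro z hz
      obtain ⟨V, hVo, hzV, huniq⟩ := hS1 z
      by_cases hVS : (V ∩ S).Nonempty
      · obtain ⟨w, hw⟩ := hVS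
        have hwz : z ≠ w := fun h => hz (h ▸ hw.2)
        refine Filter.mem_of_superset ((hVo.inter isOpen_compl_singleton).mem_nhds
          ⟨hzV, hwz⟩) ?_
        rintro y ⟨hyV, hyw⟩ hyS
        exact hyw (huniq y ⟨hyV, hyS⟩ w hw)
      · exact Filter.mem_of_superset (hVo.mem_nhds hzV)
          (fun y hyV hyS => hVS ⟨y, hyV, hyS⟩)
    have hSdisc : ∀ x ∈ S, ∃ U, IsOpen U ∧ U ∩ S = {x} := by
      intro x hx
      obtain ⟨V, hVo, hxV, huniq⟩ := hS1 x
      exact ⟨V, hVo, Set.eq_singleton_iff_unique_mem.2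
        ⟨⟨hxV, hx⟩, fun w hw => huniq w hw x ⟨hxV, hx⟩⟩⟩
    have hScnt := hext S hSclosed hSdisc
    have hptinj : Function.Injective pt := by
      intro U₁ U₂ h
      obtain ⟨V, hV, hzV⟩ := exists_lev_mem hG (pt U₁) n
      have h2 : pt U₁ ∈ H n ↑U₂ := h ▸ hpt U₂
      exact Subtype.ext (hkey n V hV _ _ hzV hzV _ _ (hpt U₁) h2)
    have : Countable ↥S := hScnt.to_subtype
    have : Countable ↥T :=
      (Function.Injective.countable (f := fun U : ↥T => (⟨pt U, Set.mem_range_self U⟩ : ↥S))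
        (fun U₁ U₂ h => hptinj (congrArg Subtype.val h)))
    exact Set.countable_coe_iff.1 this
  set T : Set ↥𝒰 := ⋃ n, {U : ↥𝒰 | (H n U).Nonempty} with hTdef
  refine ⟨(fun U : ↥𝒰 => (U : Set X)) '' T, ?_, (countable_iUnion hcnt).image _, ?_⟩
  · rintro s ⟨U, -, rfl⟩; exact U.2
  · intro x
    obtain ⟨n, U, hxH⟩ := hHcov x
    exact ⟨↑U, ⟨U, Set.mem_iUnion.2 ⟨n, ⟨x, hxH⟩⟩, rfl⟩, hxH.1 (mem_star_self hG x n)⟩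

lemma secondCountable_of_ext {G : ℕ → Set (Set X)} [T2Space X]
    (hG : IsDevelopment X G)
    (hext : ∀ S : Set X, IsClosed S → (∀ x ∈ S, ∃ U, IsOpen U ∧ U ∩ S = {x}) → S.Countable) :
    SecondCountableTopology X := by
  have := fun n => exists_countable_subcover hG hext (G n) (hG.1 n) (hG.2.1 n)
  choose 𝒞 hsub hcnt hcov using this
  have hbasis : IsTopologicalBasis (⋃ n, 𝒞 n) := by
    refine isTopologicalBasis_of_isOpen_of_nhds ?_ ?_
    · intro u hu
      obtain ⟨n, hn⟩ := Set.mem_iUnion.1 hu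
      exact hG.1 n u (hsub n hn)
    · intro a u hau hu
      obtain ⟨n, hn⟩ := hG.2.2 a u hu hau
      obtain ⟨v, hv, hav⟩ := hcov n a
      exact ⟨v, Set.mem_iUnion.2 ⟨n, hv⟩, hav, hn v (hsub n hv) hav⟩
  exact hbasis.secondCountableTopology (countable_iUnion hcnt)

theorem forward {X : Type} [tX : TopologicalSpace X] (hM : MooreSpace X)
    (hsep : SeparableSpace X) (hnorm : NormalSpace X)
    (hnm : ¬ MetrizableSpace X) : ∃ A : Set ℝ, IsQSet A ∧ ¬ A.Countable := by
  classical
  obtain ⟨hT2, hReg, G, hG⟩ := hM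
  haveI := hT2; haveI := hReg; haveI := hsep
  -- Step 1: there is an uncountable closed discrete set
  have hext : ¬ ∀ S : Set X, IsClosed S →
      (∀ x ∈ S, ∃ U, IsOpen U ∧ U ∩ S = {x}) → S.Countable := by
    intro hext
    haveI : SecondCountableTopology X := secondCountable_of_ext hG hext
    haveI : T3Space X := ⟨⟩
    exact hnm inferInstance
  push_neg at hext
  obtain ⟨S, hScl, hSdisc, hSunc⟩ := hext
  have hSne : S.Nonempty := by
    rcases S.eq_empty_or_nonempty with rfl | h
    · exact absurd Set.countable_empty hSunc
    · exact h
  haveI : Nonempty X := ⟨hSne.some⟩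
  obtain ⟨d, hd⟩ := exists_dense_seq X
  set pair : ℕ × ℕ ≃ ℕ := Denumerable.eqv (ℕ × ℕ) with hpair
  set E : X → ℕ → Bool := fun x i =>
    if d (pair.symm i).2 ∈ star G x (pair.symm i).1 then true else false with hE
  have hEapp : ∀ x n m, E x (pair (n, m)) = true ↔ d m ∈ star G x n := by
    intro x n m
    simp only [hE, Equiv.symm_apply_apply]
    split <;> simp_all
  have hEinj : Function.Injective E := by
    intro x y hxy
    by_contra hne
    obtain ⟨u, v, hu, hv, hxu, hyv, huv⟩ := t2_separation hne
    obtain ⟨n1, hn1⟩ := star_subset_of_open hG hu hxu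
    obtain ⟨n2, hn2⟩ := star_subset_of_open hG hv hyv
    set n := max n1 n2
    have hsx : star G x n ⊆ u := (star_anti (le_max_left _ _)).trans hn1
    have hsy : star G y n ⊆ v := (star_anti (le_max_right _ _)).trans hn2
    obtain ⟨m, hm⟩ := hd.exists_mem_open (isOpen_star hG x n) ⟨x, mem_star_self hG x n⟩
    have h1 : E x (pair (n, m)) = true := (hEapp x n m).2 hm
    have h2 : d m ∈ star G y n := (hEapp y n m).1 (hxy ▸ h1)
    exact Set.disjoint_left.1 huv (hsx hm) (hsy h2)
  set r := Cardinal.cantorFunction (1/3) with hr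
  have hrinj : Function.Injective r :=
    Cardinal.cantorFunction_injective (by norm_num) (by norm_num)
  have hrcont : Continuous r := by
    rw [hr]
    have : (Cardinal.cantorFunction (1/3)) =
        fun f : ℕ → Bool => ∑' n, Cardinal.cantorFunctionAux (1/3) f n := rfl
    rw [this]
    apply continuous_tsum (u := fun n => (1/3 : ℝ)^n)
    · intro i
      have : (fun f : ℕ → Bool => Cardinal.cantorFunctionAux (1/3) f i) =
          (fun b : Bool => cond b ((1/3 : ℝ)^i) 0) ∘ (fun f : ℕ → Bool => f i) := rfl
      rw [this]
      exact (continuous_of_discreteTopology).comp (continuous_apply i)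
    · exact summable_geometric_of_lt_one (by norm_num) (by norm_num)
    · intro n f
      rcases Bool.eq_false_or_eq_true (f n) with h | h <;>
        simp [Cardinal.cantorFunctionAux, h] <;> positivity
  have hrce : Topology.IsClosedEmbedding r := hrcont.isClosedEmbedding hrinj
  set h : X → ℝ := r ∘ E with hh
  have hhinj : Function.Injective h := hrinj.comp hEinj
  refine ⟨h '' S, ?_, ?_⟩
  · -- Q-set
    intro B' hB'
    set B : Set X := S ∩ h ⁻¹' B' with hBdef
    have hhB : h '' B = B' := by
      apply Set.Subset.antisymm
      · rintro y ⟨x, ⟨hxS, hxB⟩, rfl⟩; exact hxB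
      · intro y hy
        obtain ⟨x, hxS, rfl⟩ := hB' hy
        exact ⟨x, ⟨hxS, hy⟩, rfl⟩
    have hBcl : IsClosed B := subsets_of_discrete_closed hScl hSdisc Set.inter_subset_left
    have hSBcl : IsClosed (S \ B) := subsets_of_discrete_closed hScl hSdisc Set.diff_subset
    obtain ⟨Uo, Vo, hUo, hVo, hBU, hSV, hdisj⟩ :=
      hnorm.normal B (S \ B) hBcl hSBcl (Set.disjoint_left.2 fun x hx hx' => hx'.2 hx)
    set M : Set ℕ := {m | d m ∈ Uo} with hM
    set O : ℕ → Set (ℕ → Bool) := fun N =>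
      ⋃ n ∈ {n : ℕ | N ≤ n}, {f : ℕ → Bool | ∃ m ∈ M, f (pair (n, m)) = true} with hO
    have hOopen : ∀ N, IsOpen (O N) := by
      intro N
      refine isOpen_biUnion fun n _ => ?_
      have : {f : ℕ → Bool | ∃ m ∈ M, f (pair (n, m)) = true} =
          ⋃ m ∈ M, (fun f : ℕ → Bool => f (pair (n, m))) ⁻¹' {true} := by
        ext f; simp
      rw [this]
      exact isOpen_biUnion fun m _ => (continuous_apply _).isOpen_preimage _ trivial
    have hmemB : ∀ x ∈ B, ∀ N, E x ∈ O N := by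
      intro x hx N
      obtain ⟨n0, hn0⟩ := star_subset_of_open hG hUo (hBU hx)
      set n := max N n0
      have hsub : star G x n ⊆ Uo := (star_anti (le_max_right _ _)).trans hn0
      obtain ⟨m, hm⟩ := hd.exists_mem_open (isOpen_star hG x n) ⟨x, mem_star_self hG x n⟩
      exact Set.mem_biUnion (le_max_left N n0)
        ⟨m, hsub hm, (hEapp x n m).2 hm⟩
    have hmemSB : ∀ x ∈ S \ B, ∃ N, E x ∉ O N := by
      intro x hx
      obtain ⟨k, hk⟩ := star_subset_of_open hG hVo (hSV hx)
      refine ⟨k, ?_⟩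
      intro hmem
      obtain ⟨n, hn, hfn⟩ := Set.mem_iUnion₂.1 hmem
      obtain ⟨m, hmM, hmtrue⟩ := hfn
      have h1 : d m ∈ star G x n := (hEapp x n m).1 hmtrue
      have h2 : d m ∈ Vo := hk (star_anti hn h1)
      exact Set.disjoint_left.1 hdisj hmM h2
    choose W hWopen hWpre using fun N =>
      (hrce.toIsInducing.isOpen_iff).1 (hOopen N)
    refine ⟨(⋂ N, W N) ∩ Set.range r, ⟨(IsGδ.iInter fun N => (hWopen N).isGδ).inter
      (hrce.isClosed_range.isGδ), ?_⟩⟩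
    apply Set.Subset.antisymm
    · intro y hy
      rw [← hhB] at hy
      obtain ⟨x, hxB, rfl⟩ := hy
      refine ⟨⟨Set.mem_iInter.2 fun N => ?_, ⟨E x, rfl⟩⟩, ⟨x, hxB.1, rfl⟩⟩
      have : E x ∈ r ⁻¹' (W N) := (hWpre N) ▸ hmemB x hxB N
      exact this
    · intro y hy
      obtain ⟨⟨hyW, -⟩, himg⟩ := hy
      obtain ⟨x, hxS, rfl⟩ := himg
      rw [← hhB]
      refine ⟨x, ⟨hxS, ?_⟩, rfl⟩
      by_contra hxB
      obtain ⟨N, hN⟩ := hmemSB x ⟨hxS, fun hx => hxB hx.2⟩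
      apply hN
      have : h x ∈ W N := Set.mem_iInter.1 hyW N
      have : E x ∈ r ⁻¹' (W N) := this
      rwa [hWpre N] at this
  · intro hcnt
    exact hSunc (Set.countable_of_injective_of_countable_image
      (hhinj.injOn) hcnt)

end Forward

end QMoore

/-- There exists a separable, normal, nonmetrizable Moore space if and only if there
exists an uncountable Q-set of reals. -/
theorem separable_normal_nonmetrizable_moore_iff_qset :
    (∃ (X : Type) (t : TopologicalSpace X),
        @MooreSpace X t ∧ @TopologicalSpace.SeparableSpace X t ∧ @NormalSpace X t ∧
          ¬ @TopologicalSpace.MetrizableSpace X t) ↔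
    (∃ A : Set ℝ, IsQSet A ∧ ¬ A.Countable) := by
  constructor
  · rintro ⟨X, t, hM, hsep, hnorm, hnm⟩
    exact QMoore.forward hM hsep hnorm hnm
  · rintro ⟨A, hQ, hA⟩
    exact QMoore.backward A hQ hA
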